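/- Let {x_n} and {y_n} be sequences of nonnegative reals such that lim_{n→∞} x_n/(a_F n^{b_F} c^n) = 1 and lim_{n→∞} y_n/(a_G n^{b_G} c^n) = 1, where a_F, a_G > 0, b_F, b_G are nonnegative integers, and c ≥ 1. Then the convolution z_n = Σ_{k+m=n} x_k y_m satisfies lim_{n→∞} z_n/(a_F a_G B(b_F+1, b_G+1) n^{b_F+b_G+1} c^n) = 1, where B(u,v) is the Euler Beta function, B(b_F+1, b_G+1) = ∫_0^1 x^{b_F}(1−x)^{b_G} dx. -/

import Mathlib

open Filter Finset

set_option linter.unusedVariables false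

private lemma sum_pow_tendsto (p : ℕ) :
    Tendsto (fun n : ℕ => (∑ k ∈ range (n+1), (k:ℝ)^p) / (n:ℝ)^(p+1)) atTop
      (nhds (1 / ((p:ℝ)+1))) := by
  have key : ∀ n : ℕ, 1 ≤ n →
      1/((p:ℝ)+1) ≤ (∑ k ∈ range (n+1), (k:ℝ)^p) / (n:ℝ)^(p+1) ∧
      (∑ k ∈ range (n+1), (k:ℝ)^p) / (n:ℝ)^(p+1) ≤ 1/((p:ℝ)+1) + 1/(n:ℝ) := by
    intro n hn
    have hn0 : (0:ℝ) < (n:ℝ) := by exact_mod_cast hn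
    have hnp : (0:ℝ) < (n:ℝ)^(p+1) := pow_pos hn0 _
    have hmono : MonotoneOn (fun x : ℝ => x ^ p) (Set.Icc (0:ℝ) (0 + (n:ℕ))) :=
      fun a ha b _ hab => pow_le_pow_left₀ ha.1 hab p
    have hp1 : (0:ℝ) < (p:ℝ)+1 := by positivity
    have hint : (∫ x in (0:ℝ)..((0:ℝ) + (n:ℕ)), x ^ p) = (n:ℝ)^(p+1)/((p:ℝ)+1) := by
      rw [integral_pow]; norm_num
    have hlow : (n:ℝ)^(p+1)/((p:ℝ)+1) ≤ ∑ k ∈ range (n+1), (k:ℝ)^p := by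
      have h1 := hmono.integral_le_sum
      rw [hint] at h1
      refine h1.trans ?_
      rw [Finset.sum_range_succ' (fun k : ℕ => (k:ℝ)^p) n]
      have : ∑ i ∈ range n, ((0:ℝ) + ((i + 1 : ℕ):ℝ))^p = ∑ i ∈ range n, (((i+1:ℕ)):ℝ)^p := by
        simp
      rw [this]
      have h0 : (0:ℝ) ≤ ((0:ℕ):ℝ)^p := by positivity
      linarith
    have hup : ∑ k ∈ range (n+1), (k:ℝ)^p ≤ (n:ℝ)^(p+1)/((p:ℝ)+1) + (n:ℝ)^p := by
      rw [Finset.sum_range_succ]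
      have h2 := hmono.sum_le_integral
      rw [hint] at h2
      have : ∑ i ∈ range n, ((0:ℝ) + ((i:ℕ):ℝ))^p = ∑ i ∈ range n, (((i:ℕ)):ℝ)^p := by
        simp
      rw [this] at h2
      linarith
    constructor
    · rw [le_div_iff₀ hnp]
      calc 1/((p:ℝ)+1) * (n:ℝ)^(p+1) = (n:ℝ)^(p+1)/((p:ℝ)+1) := by ring
      _ ≤ _ := hlow
    · rw [div_le_iff₀ hnp]
      refine hup.trans (le_of_eq ?_)
      field_simp
      ring
  have h1 : Tendsto (fun n : ℕ => 1/((p:ℝ)+1) + 1/(n:ℝ)) atTop (nhds (1/((p:ℝ)+1))) := by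
    have h2 : Tendsto (fun n : ℕ => 1/(n:ℝ)) atTop (nhds 0) := tendsto_one_div_atTop_nhds_zero_nat
    simpa using tendsto_const_nhds.add h2
  refine tendsto_of_tendsto_of_tendsto_of_le_of_le' tendsto_const_nhds h1 ?_ ?_
  · filter_upwards [eventually_ge_atTop 1] with n hn using (key n hn).1
  · filter_upwards [eventually_ge_atTop 1] with n hn using (key n hn).2

private lemma riemann (bF bG : ℕ) :
    Tendsto (fun n : ℕ =>
        (∑ k ∈ range (n+1), (k:ℝ)^bF * ((n:ℝ) - (k:ℝ))^bG) / (n:ℝ)^(bF+bG+1))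
      atTop (nhds (∫ t in (0:ℝ)..1, t ^ bF * (1 - t) ^ bG)) := by
  have hIeq : (∫ t in (0:ℝ)..1, t ^ bF * (1 - t) ^ bG)
      = ∑ m ∈ range (bG+1), ((-1:ℝ)^(m+bG) * (bG.choose m)) *
          (1/(((bF + (bG - m) : ℕ):ℝ) + 1)) := by
    have hb : ∀ t : ℝ, t ^ bF * (1 - t) ^ bG
        = ∑ m ∈ range (bG+1), ((-1:ℝ)^(m+bG) * (bG.choose m)) * t ^ (bF + (bG - m)) := by
      intro t
      rw [sub_pow, Finset.mul_sum]
      refine Finset.sum_congr rfl fun m hm => ?_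
      rw [pow_add]
      ring
    simp_rw [hb]
    rw [intervalIntegral.integral_finset_sum]
    · refine Finset.sum_congr rfl fun m hm => ?_
      rw [intervalIntegral.integral_const_mul, integral_pow]
      norm_num
    · intro m hm
      exact (Continuous.intervalIntegrable (by continuity) 0 1)
  have hsum : ∀ n : ℕ, 1 ≤ n →
      (∑ m ∈ range (bG+1), ((-1:ℝ)^(m+bG) * (bG.choose m)) *
        ((∑ k ∈ range (n+1), (k:ℝ)^(bF + (bG - m))) / (n:ℝ)^((bF + (bG - m)) + 1)))
      = (∑ k ∈ range (n+1), (k:ℝ)^bF * ((n:ℝ) - (k:ℝ))^bG) / (n:ℝ)^(bF+bG+1) := by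
    intro n hn
    have hn0 : (n:ℝ) ≠ 0 := by positivity
    have expand : ∀ k : ℕ, (k:ℝ)^bF * ((n:ℝ) - (k:ℝ))^bG
        = ∑ m ∈ range (bG+1), (((-1:ℝ)^(m+bG) * (bG.choose m)) * (n:ℝ)^m) * (k:ℝ)^(bF + (bG - m)) := by
      intro k
      rw [sub_pow, Finset.mul_sum]
      refine Finset.sum_congr rfl fun m hm => ?_
      rw [pow_add]
      ring
    simp_rw [expand]
    rw [Finset.sum_comm, Finset.sum_div]
    refine Finset.sum_congr rfl fun m hm => ?_
    rw [← Finset.mul_sum]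
    have hm' : m ≤ bG := Nat.lt_succ_iff.mp (Finset.mem_range.mp hm)
    have hpow : (n:ℝ)^(bF+bG+1) = (n:ℝ)^((bF + (bG - m)) + 1) * (n:ℝ)^m := by
      rw [← pow_add]; congr 1; omega
    rw [hpow]
    field_simp
  have hlim : Tendsto (fun n : ℕ => ∑ m ∈ range (bG+1), ((-1:ℝ)^(m+bG) * (bG.choose m)) *
        ((∑ k ∈ range (n+1), (k:ℝ)^(bF + (bG - m))) / (n:ℝ)^((bF + (bG - m)) + 1)))
      atTop (nhds (∑ m ∈ range (bG+1), ((-1:ℝ)^(m+bG) * (bG.choose m)) *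
        (1/(((bF + (bG - m) : ℕ):ℝ) + 1)))) :=
    tendsto_finset_sum _ fun m _ => (sum_pow_tendsto (bF + (bG - m))).const_mul _
  rw [hIeq]
  apply hlim.congr'
  filter_upwards [eventually_ge_atTop 1] with n hn using hsum n hn

private lemma sum_reflect (f g : ℕ → ℝ) (n : ℕ) :
    ∑ k ∈ range (n+1), f k * g (n-k) = ∑ j ∈ range (n+1), f (n-j) * g j := by
  have h := Finset.sum_range_reflect (fun k => f k * g (n-k)) (n+1)
  rw [← h]
  refine Finset.sum_congr rfl fun j hj => ?_
  have hj' : j ≤ n := Nat.lt_succ_iff.mp (Finset.mem_range.mp hj)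
  have h1 : n + 1 - 1 - j = n - j := by omega
  have h2 : n - (n - j) = j := by omega
  rw [h1, h2]

private lemma key_bound
    (x y v w : ℕ → ℝ) (hx0 : ∀ n, 0 ≤ x n) (hy0 : ∀ n, 0 ≤ y n)
    (hv0 : ∀ n, 0 ≤ v n) (hw0 : ∀ n, 0 ≤ w n)
    (hvmono : ∀ k m : ℕ, k ≤ m → v k ≤ v m) (hwmono : ∀ k m : ℕ, k ≤ m → w k ≤ w m)
    (δ : ℝ) (hδ0 : 0 < δ) (hδ1 : δ ≤ 1) (N n : ℕ) (hn : 2*N ≤ n)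
    (hN : ∀ k, N ≤ k → |x k - v k| ≤ δ * v k ∧ |y k - w k| ≤ δ * w k) :
    |(∑ k ∈ range (n+1), x k * y (n-k)) - ∑ k ∈ range (n+1), v k * w (n-k)|
      ≤ 2 * (∑ k ∈ range N, |x k - v k|) * w n
        + ((∑ m ∈ range N, y m) + (∑ m ∈ range N, |y m - w m|)) * v n
        + 3 * δ * (∑ k ∈ range (n+1), v k * w (n-k)) := by
  have hNn : N ≤ n + 1 := by omega
  have hyub : ∀ m, N ≤ m → y m ≤ 2 * w m := by
    intro m hm
    have h := abs_le.mp (hN m hm).2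
    nlinarith [hw0 m]
  have step12 : |(∑ k ∈ range (n+1), x k * y (n-k)) - ∑ k ∈ range (n+1), v k * w (n-k)|
      ≤ (∑ k ∈ range (n+1), |x k - v k| * y (n-k))
        + ∑ k ∈ range (n+1), v k * |y (n-k) - w (n-k)| := by
    rw [← Finset.sum_sub_distrib]
    refine (Finset.abs_sum_le_sum_abs _ _).trans ?_
    rw [← Finset.sum_add_distrib]
    refine Finset.sum_le_sum fun k _ => ?_
    have h1 : x k * y (n-k) - v k * w (n-k)
        = (x k - v k) * y (n-k) + v k * (y (n-k) - w (n-k)) := by ring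
    rw [h1]
    refine (abs_add_le _ _).trans (le_of_eq ?_)
    rw [abs_mul, abs_mul, abs_of_nonneg (hy0 _), abs_of_nonneg (hv0 _)]
  have hrefl_vw : ∑ j ∈ range (n+1), v (n-j) * w j = ∑ k ∈ range (n+1), v k * w (n-k) :=
    (sum_reflect v w n).symm
  have hA : (∑ k ∈ range (n+1), |x k - v k| * y (n-k))
      ≤ 2 * (∑ k ∈ range N, |x k - v k|) * w n
        + δ * ((∑ m ∈ range N, y m) * v n + 2 * ∑ k ∈ range (n+1), v k * w (n-k)) := by
    rw [← Finset.sum_range_add_sum_Ico _ hNn]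
    have hA1 : ∑ k ∈ range N, |x k - v k| * y (n-k)
        ≤ 2 * (∑ k ∈ range N, |x k - v k|) * w n := by
      have hb : ∀ k ∈ range N, |x k - v k| * y (n-k) ≤ |x k - v k| * (2 * w n) := by
        intro k hk
        have hkN : k < N := Finset.mem_range.mp hk
        have h1 : N ≤ n - k := by omega
        refine mul_le_mul_of_nonneg_left ?_ (abs_nonneg _)
        have h2 : w (n-k) ≤ w n := hwmono _ _ (by omega)
        have h3 := hyub _ h1
        linarith
      refine (Finset.sum_le_sum hb).trans ?_
      rw [← Finset.sum_mul]
      linarith [mul_nonneg (Finset.sum_nonneg (s := range N) fun k _ => abs_nonneg (x k - v k)) (hw0 n)]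
    have hA2 : ∑ k ∈ Ico N (n+1), |x k - v k| * y (n-k)
        ≤ δ * ((∑ m ∈ range N, y m) * v n + 2 * ∑ k ∈ range (n+1), v k * w (n-k)) := by
      have h2 : ∑ k ∈ Ico N (n+1), |x k - v k| * y (n-k)
          ≤ ∑ k ∈ Ico N (n+1), δ * (v k * y (n-k)) := by
        refine Finset.sum_le_sum fun k hk => ?_
        have hkN : N ≤ k := (Finset.mem_Ico.mp hk).1
        calc |x k - v k| * y (n-k) ≤ (δ * v k) * y (n-k) :=
              mul_le_mul_of_nonneg_right (hN k hkN).1 (hy0 _)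
        _ = δ * (v k * y (n-k)) := by ring
      refine h2.trans ?_
      rw [← Finset.mul_sum]
      refine mul_le_mul_of_nonneg_left ?_ hδ0.le
      have h3 : ∑ k ∈ Ico N (n+1), v k * y (n-k) ≤ ∑ k ∈ range (n+1), v k * y (n-k) := by
        rw [Finset.range_eq_Ico]
        exact Finset.sum_le_sum_of_subset_of_nonneg (Finset.Ico_subset_Ico (by omega) le_rfl)
          fun i _ _ => mul_nonneg (hv0 _) (hy0 _)
      refine h3.trans ?_
      rw [sum_reflect v y n, ← Finset.sum_range_add_sum_Ico _ hNn]
      have h4 : ∑ j ∈ range N, v (n-j) * y j ≤ (∑ m ∈ range N, y m) * v n := by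
        rw [Finset.sum_mul]
        refine Finset.sum_le_sum fun j hj => ?_
        calc v (n-j) * y j ≤ v n * y j :=
              mul_le_mul_of_nonneg_right (hvmono _ _ (by omega)) (hy0 _)
        _ = y j * v n := by ring
      have h5 : ∑ j ∈ Ico N (n+1), v (n-j) * y j
          ≤ 2 * ∑ k ∈ range (n+1), v k * w (n-k) := by
        have h6 : ∑ j ∈ Ico N (n+1), v (n-j) * y j
            ≤ ∑ j ∈ Ico N (n+1), 2 * (v (n-j) * w j) := by
          refine Finset.sum_le_sum fun j hj => ?_
          have hjN : N ≤ j := (Finset.mem_Ico.mp hj).1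
          calc v (n-j) * y j ≤ v (n-j) * (2 * w j) :=
                mul_le_mul_of_nonneg_left (hyub _ hjN) (hv0 _)
          _ = 2 * (v (n-j) * w j) := by ring
        refine h6.trans ?_
        rw [← Finset.mul_sum]
        refine mul_le_mul_of_nonneg_left ?_ (by norm_num)
        have h7 : ∑ j ∈ Ico N (n+1), v (n-j) * w j ≤ ∑ j ∈ range (n+1), v (n-j) * w j := by
          rw [Finset.range_eq_Ico]
          exact Finset.sum_le_sum_of_subset_of_nonneg (Finset.Ico_subset_Ico (by omega) le_rfl)
            fun i _ _ => mul_nonneg (hv0 _) (hw0 _)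
        rw [hrefl_vw] at h7
        exact h7
      linarith
    linarith
  have hB : (∑ k ∈ range (n+1), v k * |y (n-k) - w (n-k)|)
      ≤ (∑ m ∈ range N, |y m - w m|) * v n + δ * ∑ k ∈ range (n+1), v k * w (n-k) := by
    rw [sum_reflect v (fun m => |y m - w m|) n, ← Finset.sum_range_add_sum_Ico _ hNn]
    have h4 : ∑ j ∈ range N, v (n-j) * |y j - w j| ≤ (∑ m ∈ range N, |y m - w m|) * v n := by
      rw [Finset.sum_mul]
      refine Finset.sum_le_sum fun j hj => ?_
      calc v (n-j) * |y j - w j| ≤ v n * |y j - w j| :=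
            mul_le_mul_of_nonneg_right (hvmono _ _ (by omega)) (abs_nonneg _)
      _ = |y j - w j| * v n := by ring
    have h5 : ∑ j ∈ Ico N (n+1), v (n-j) * |y j - w j|
        ≤ δ * ∑ k ∈ range (n+1), v k * w (n-k) := by
      have h6 : ∑ j ∈ Ico N (n+1), v (n-j) * |y j - w j|
          ≤ ∑ j ∈ Ico N (n+1), δ * (v (n-j) * w j) := by
        refine Finset.sum_le_sum fun j hj => ?_
        have hjN : N ≤ j := (Finset.mem_Ico.mp hj).1
        calc v (n-j) * |y j - w j| ≤ v (n-j) * (δ * w j) :=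
              mul_le_mul_of_nonneg_left (hN j hjN).2 (hv0 _)
        _ = δ * (v (n-j) * w j) := by ring
      refine h6.trans ?_
      rw [← Finset.mul_sum]
      refine mul_le_mul_of_nonneg_left ?_ hδ0.le
      have h7 : ∑ j ∈ Ico N (n+1), v (n-j) * w j ≤ ∑ j ∈ range (n+1), v (n-j) * w j := by
        rw [Finset.range_eq_Ico]
        exact Finset.sum_le_sum_of_subset_of_nonneg (Finset.Ico_subset_Ico (by omega) le_rfl)
          fun i _ _ => mul_nonneg (hv0 _) (hw0 _)
      rw [hrefl_vw] at h7
      exact h7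
    linarith
  have hMy0 : 0 ≤ ∑ m ∈ range N, y m := Finset.sum_nonneg fun m _ => hy0 m
  have hd : δ * ((∑ m ∈ range N, y m) * v n) ≤ (∑ m ∈ range N, y m) * v n := by
    nlinarith [mul_nonneg hMy0 (hv0 n)]
  linarith

private lemma ev_le (C D : ℝ) (hD : 0 < D) (a b : ℕ) (hab : a < b) :
    ∀ᶠ n : ℕ in atTop, C * (n:ℝ)^a ≤ D * (n:ℝ)^b := by
  have hba : b - a ≠ 0 := by omega
  have h0 : Tendsto (fun n : ℕ => C / (n:ℝ)^(b-a)) atTop (nhds 0) :=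
    Tendsto.div_atTop tendsto_const_nhds
      ((tendsto_pow_atTop hba).comp tendsto_natCast_atTop_atTop)
  filter_upwards [h0.eventually_lt_const hD, eventually_ge_atTop 1] with n h hn
  have hn0 : (0:ℝ) < (n:ℝ) := by exact_mod_cast hn
  have h1 : (0:ℝ) < (n:ℝ)^(b-a) := pow_pos hn0 _
  rw [div_lt_iff₀ h1] at h
  have h2 : C * (n:ℝ)^a ≤ (D * (n:ℝ)^(b-a)) * (n:ℝ)^a :=
    mul_le_mul_of_nonneg_right h.le (pow_nonneg hn0.le a)
  refine h2.trans (le_of_eq ?_)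
  rw [mul_assoc, ← pow_add]
  congr 2
  omega

private lemma main_one (x y : ℕ → ℝ) (hx0 : ∀ n, 0 ≤ x n) (hy0 : ∀ n, 0 ≤ y n)
    (aF aG : ℝ) (haF : 0 < aF) (haG : 0 < aG) (bF bG : ℕ)
    (hx : Tendsto (fun n : ℕ => x n / (aF * (n:ℝ)^bF)) atTop (nhds 1))
    (hy : Tendsto (fun n : ℕ => y n / (aG * (n:ℝ)^bG)) atTop (nhds 1)) :
    Tendsto (fun n : ℕ => (∑ k ∈ range (n+1), x k * y (n-k)) /
      (aF * aG * (∫ t in (0:ℝ)..1, t^bF*(1-t)^bG) * (n:ℝ)^(bF+bG+1))) atTop (nhds 1) := by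
  have hI : 0 < ∫ t in (0:ℝ)..1, t^bF*(1-t)^bG := by
    apply intervalIntegral.intervalIntegral_pos_of_pos_on
    · exact Continuous.intervalIntegrable (by continuity) 0 1
    · intro t ht
      exact mul_pos (pow_pos ht.1 _) (pow_pos (by nlinarith [ht.2]) _)
    · norm_num
  set I : ℝ := ∫ t in (0:ℝ)..1, t^bF*(1-t)^bG with hIdef
  have hv0 : ∀ k : ℕ, (0:ℝ) ≤ aF * (k:ℝ)^bF := fun k => by positivity
  have hw0 : ∀ k : ℕ, (0:ℝ) ≤ aG * (k:ℝ)^bG := fun k => by positivity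
  have hvmono : ∀ k m : ℕ, k ≤ m → aF * (k:ℝ)^bF ≤ aF * (m:ℝ)^bF := fun k m h =>
    mul_le_mul_of_nonneg_left (pow_le_pow_left₀ (Nat.cast_nonneg k) (Nat.cast_le.mpr h) bF) haF.le
  have hwmono : ∀ k m : ℕ, k ≤ m → aG * (k:ℝ)^bG ≤ aG * (m:ℝ)^bG := fun k m h =>
    mul_le_mul_of_nonneg_left (pow_le_pow_left₀ (Nat.cast_nonneg k) (Nat.cast_le.mpr h) bG) haG.le
  -- S in closed-cast form
  have hS : ∀ n : ℕ, (∑ k ∈ range (n+1), (aF * (k:ℝ)^bF) * (aG * (((n-k : ℕ)):ℝ)^bG))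
      = aF * aG * ∑ k ∈ range (n+1), (k:ℝ)^bF * ((n:ℝ) - (k:ℝ))^bG := by
    intro n
    rw [Finset.mul_sum]
    refine Finset.sum_congr rfl fun k hk => ?_
    have hk' : k ≤ n := Nat.lt_succ_iff.mp (Finset.mem_range.mp hk)
    rw [Nat.cast_sub hk']
    ring
  have hSP : Tendsto (fun n : ℕ =>
      (∑ k ∈ range (n+1), (aF * (k:ℝ)^bF) * (aG * (((n-k : ℕ)):ℝ)^bG)) /
        (aF * aG * I * (n:ℝ)^(bF+bG+1))) atTop (nhds 1) := by
    have h1 : Tendsto (fun n : ℕ =>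
        ((∑ k ∈ range (n+1), (k:ℝ)^bF * ((n:ℝ)-(k:ℝ))^bG) / (n:ℝ)^(bF+bG+1)) / I)
        atTop (nhds 1) := by
      have h2 := (riemann bF bG).div_const I
      rw [← hIdef] at h2
      rwa [div_self hI.ne'] at h2
    apply h1.congr'
    filter_upwards [eventually_ge_atTop 1] with n hn
    have hn0 : (0:ℝ) < (n:ℝ) := by exact_mod_cast hn
    have hne : ((n:ℝ))^(bF+bG+1) ≠ 0 := by positivity
    rw [hS n]
    field_simp
  -- approximation
  have happrox : ∀ δ : ℝ, 0 < δ → ∃ N : ℕ, 1 ≤ N ∧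
      ∀ k, N ≤ k → |x k - aF * (k:ℝ)^bF| ≤ δ * (aF * (k:ℝ)^bF) ∧
        |y k - aG * (k:ℝ)^bG| ≤ δ * (aG * (k:ℝ)^bG) := by
    intro δ hδ
    obtain ⟨N1, hN1⟩ := Metric.tendsto_atTop.mp hx δ hδ
    obtain ⟨N2, hN2⟩ := Metric.tendsto_atTop.mp hy δ hδ
    refine ⟨max (max N1 N2) 1, le_max_right _ _, fun k hk => ?_⟩
    have hk1 : 1 ≤ k := le_trans (le_max_right _ _) hk
    have hkpos : (0:ℝ) < (k:ℝ) := by exact_mod_cast hk1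
    have hvk : (0:ℝ) < aF * (k:ℝ)^bF := by positivity
    have hwk : (0:ℝ) < aG * (k:ℝ)^bG := by positivity
    constructor
    · have h := hN1 k (le_trans (le_trans (le_max_left _ _) (le_max_left _ _)) hk)
      rw [Real.dist_eq] at h
      have heq : x k - aF * (k:ℝ)^bF = (x k / (aF * (k:ℝ)^bF) - 1) * (aF * (k:ℝ)^bF) := by
        field_simp
      rw [heq, abs_mul, abs_of_pos hvk]
      exact mul_le_mul_of_nonneg_right h.le hvk.le
    · have h := hN2 k (le_trans (le_trans (le_max_right _ _) (le_max_left _ _)) hk)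
      rw [Real.dist_eq] at h
      have heq : y k - aG * (k:ℝ)^bG = (y k / (aG * (k:ℝ)^bG) - 1) * (aG * (k:ℝ)^bG) := by
        field_simp
      rw [heq, abs_mul, abs_of_pos hwk]
      exact mul_le_mul_of_nonneg_right h.le hwk.le
  -- the claim
  have claim : ∀ ε : ℝ, 0 < ε → ∀ᶠ n : ℕ in atTop,
      |(∑ k ∈ range (n+1), x k * y (n-k)) -
        ∑ k ∈ range (n+1), (aF * (k:ℝ)^bF) * (aG * (((n-k : ℕ)):ℝ)^bG)|
      ≤ ε * (aF * aG * I * (n:ℝ)^(bF+bG+1)) := by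
    intro ε hε
    set δ := min (ε/12) 1 with hδdef
    have hδ0 : 0 < δ := lt_min (by linarith) one_pos
    have hδ1 : δ ≤ 1 := min_le_right _ _
    have hδε : δ ≤ ε/12 := min_le_left _ _
    obtain ⟨N, hN1, hN⟩ := happrox δ hδ0
    have hE1 : ∀ᶠ n : ℕ in atTop,
        (∑ k ∈ range (n+1), (aF * (k:ℝ)^bF) * (aG * (((n-k : ℕ)):ℝ)^bG))
          ≤ 2 * (aF * aG * I * (n:ℝ)^(bF+bG+1)) := by
      filter_upwards [hSP.eventually_lt_const (by norm_num : (1:ℝ) < 2), eventually_ge_atTop 1]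
        with n h hn
      have hn0 : (0:ℝ) < (n:ℝ) := by exact_mod_cast hn
      have hP : (0:ℝ) < aF * aG * I * (n:ℝ)^(bF+bG+1) := by positivity
      rw [div_lt_iff₀ hP] at h
      linarith
    have hE2 : ∀ᶠ n : ℕ in atTop,
        2 * (∑ k ∈ range N, |x k - aF * (k:ℝ)^bF|) * (aG * (n:ℝ)^bG)
          ≤ ε/4 * (aF * aG * I * (n:ℝ)^(bF+bG+1)) := by
      have h := ev_le (2 * (∑ k ∈ range N, |x k - aF * (k:ℝ)^bF|) * aG)
        (ε/4 * (aF * aG * I)) (by positivity) bG (bF+bG+1) (by omega)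
      filter_upwards [h] with n h'
      calc 2 * (∑ k ∈ range N, |x k - aF * (k:ℝ)^bF|) * (aG * (n:ℝ)^bG)
          = (2 * (∑ k ∈ range N, |x k - aF * (k:ℝ)^bF|) * aG) * (n:ℝ)^bG := by ring
      _ ≤ (ε/4 * (aF * aG * I)) * (n:ℝ)^(bF+bG+1) := h'
      _ = ε/4 * (aF * aG * I * (n:ℝ)^(bF+bG+1)) := by ring
    have hE3 : ∀ᶠ n : ℕ in atTop,
        ((∑ m ∈ range N, y m) + (∑ m ∈ range N, |y m - aG * (m:ℝ)^bG|)) * (aF * (n:ℝ)^bF)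
          ≤ ε/4 * (aF * aG * I * (n:ℝ)^(bF+bG+1)) := by
      have h := ev_le (((∑ m ∈ range N, y m) + (∑ m ∈ range N, |y m - aG * (m:ℝ)^bG|)) * aF)
        (ε/4 * (aF * aG * I)) (by positivity) bF (bF+bG+1) (by omega)
      filter_upwards [h] with n h'
      calc ((∑ m ∈ range N, y m) + (∑ m ∈ range N, |y m - aG * (m:ℝ)^bG|)) * (aF * (n:ℝ)^bF)
          = (((∑ m ∈ range N, y m) + (∑ m ∈ range N, |y m - aG * (m:ℝ)^bG|)) * aF) * (n:ℝ)^bF := by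
            ring
      _ ≤ (ε/4 * (aF * aG * I)) * (n:ℝ)^(bF+bG+1) := h'
      _ = ε/4 * (aF * aG * I * (n:ℝ)^(bF+bG+1)) := by ring
    filter_upwards [hE1, hE2, hE3, eventually_ge_atTop (2*N)] with n h1 h2 h3 h4
    have hn1 : 1 ≤ n := by omega
    have hn0 : (0:ℝ) < (n:ℝ) := by exact_mod_cast hn1
    have hP : (0:ℝ) < aF * aG * I * (n:ℝ)^(bF+bG+1) := by positivity
    have hkey := key_bound x y (fun k => aF * (k:ℝ)^bF) (fun k => aG * (k:ℝ)^bG)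
      hx0 hy0 hv0 hw0 hvmono hwmono δ hδ0 hδ1 N n h4 hN
    have hstep2 : 3 * δ * (2 * (aF * aG * I * (n:ℝ)^(bF+bG+1)))
        ≤ ε/2 * (aF * aG * I * (n:ℝ)^(bF+bG+1)) := by
      nlinarith [mul_nonneg (sub_nonneg.mpr hδε) hP.le]
    have hstep1 : 3 * δ * (∑ k ∈ range (n+1), (aF * (k:ℝ)^bF) * (aG * (((n-k : ℕ)):ℝ)^bG))
        ≤ 3 * δ * (2 * (aF * aG * I * (n:ℝ)^(bF+bG+1))) := by
      have := mul_le_mul_of_nonneg_left h1 (by positivity : (0:ℝ) ≤ 3*δ)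
      linarith
    calc |(∑ k ∈ range (n+1), x k * y (n-k)) -
        ∑ k ∈ range (n+1), (aF * (k:ℝ)^bF) * (aG * (((n-k : ℕ)):ℝ)^bG)|
        ≤ 2 * (∑ k ∈ range N, |x k - aF * (k:ℝ)^bF|) * (aG * (n:ℝ)^bG)
          + ((∑ m ∈ range N, y m) + (∑ m ∈ range N, |y m - aG * (m:ℝ)^bG|)) * (aF * (n:ℝ)^bF)
          + 3 * δ * (∑ k ∈ range (n+1), (aF * (k:ℝ)^bF) * (aG * (((n-k : ℕ)):ℝ)^bG)) := hkey
    _ ≤ ε * (aF * aG * I * (n:ℝ)^(bF+bG+1)) := by linarith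
  -- assembly
  have hzero : Tendsto (fun n : ℕ =>
      ((∑ k ∈ range (n+1), x k * y (n-k)) -
        ∑ k ∈ range (n+1), (aF * (k:ℝ)^bF) * (aG * (((n-k : ℕ)):ℝ)^bG)) /
        (aF * aG * I * (n:ℝ)^(bF+bG+1))) atTop (nhds 0) := by
    rw [NormedAddCommGroup.tendsto_nhds_zero]
    intro ε hε
    filter_upwards [claim (ε/2) (half_pos hε), eventually_ge_atTop 1] with n hn hn1
    have hn0 : (0:ℝ) < (n:ℝ) := by exact_mod_cast hn1
    have hP : (0:ℝ) < aF * aG * I * (n:ℝ)^(bF+bG+1) := by positivity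
    rw [Real.norm_eq_abs, abs_div, abs_of_pos hP, div_lt_iff₀ hP]
    nlinarith [hn, hP]
  have hfin := hzero.add hSP
  rw [zero_add] at hfin
  apply hfin.congr
  intro n
  rw [← add_div, sub_add_cancel]

/-- **Convolution asymptotics, equal exponential case.**
If `xₙ/(a_F n^{b_F} cⁿ) → 1` and `yₙ/(a_G n^{b_G} cⁿ) → 1` with `a_F, a_G > 0`,
`b_F, b_G ∈ ℕ` and `c ≥ 1`, then the convolution `zₙ = ∑_{k+m=n} x_k y_m` satisfies
`zₙ/(a_F a_G B(b_F+1, b_G+1) n^{b_F+b_G+1} cⁿ) → 1`, where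
`B(b_F+1, b_G+1) = ∫₀¹ t^{b_F} (1−t)^{b_G} dt` is the Euler Beta function. -/
theorem convolution_asymptotics_equal
    (x y : ℕ → ℝ) (hx0 : ∀ n, 0 ≤ x n) (hy0 : ∀ n, 0 ≤ y n)
    (aF aG : ℝ) (haF : 0 < aF) (haG : 0 < aG) (bF bG : ℕ) (c : ℝ) (hc : 1 ≤ c)
    (hx : Tendsto (fun n : ℕ => x n / (aF * (n : ℝ) ^ bF * c ^ n)) atTop (nhds 1))
    (hy : Tendsto (fun n : ℕ => y n / (aG * (n : ℝ) ^ bG * c ^ n)) atTop (nhds 1)) :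
    Tendsto
      (fun n : ℕ => (∑ k ∈ Finset.range (n + 1), x k * y (n - k)) /
        (aF * aG * (∫ t in (0 : ℝ)..1, t ^ bF * (1 - t) ^ bG) *
          (n : ℝ) ^ (bF + bG + 1) * c ^ n))
      atTop (nhds 1) := by
  have hc0 : (0:ℝ) < c := lt_of_lt_of_le one_pos hc
  have hcn : ∀ n : ℕ, (0:ℝ) < c ^ n := fun n => pow_pos hc0 n
  have hx0' : ∀ n, 0 ≤ x n / c ^ n := fun n => div_nonneg (hx0 n) (hcn n).le
  have hy0' : ∀ n, 0 ≤ y n / c ^ n := fun n => div_nonneg (hy0 n) (hcn n).le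
  have hx' : Tendsto (fun n : ℕ => (x n / c ^ n) / (aF * (n:ℝ)^bF)) atTop (nhds 1) := by
    apply hx.congr
    intro n
    rw [div_div, mul_comm (c ^ n)]
  have hy' : Tendsto (fun n : ℕ => (y n / c ^ n) / (aG * (n:ℝ)^bG)) atTop (nhds 1) := by
    apply hy.congr
    intro n
    rw [div_div, mul_comm (c ^ n)]
  have hmain := main_one (fun n => x n / c ^ n) (fun n => y n / c ^ n) hx0' hy0'
    aF aG haF haG bF bG hx' hy'
  apply hmain.congr
  intro n
  have hconv : (∑ k ∈ range (n+1), (x k / c ^ k) * (y (n-k) / c ^ (n-k)))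
      = (∑ k ∈ range (n+1), x k * y (n-k)) / c ^ n := by
    rw [Finset.sum_div]
    refine Finset.sum_congr rfl fun k hk => ?_
    have hk' : k ≤ n := Nat.lt_succ_iff.mp (Finset.mem_range.mp hk)
    have hpow : c ^ k * c ^ (n - k) = c ^ n := by
      rw [← pow_add]
      congr 1
      omega
    rw [div_mul_div_comm, hpow]
  rw [hconv, div_div, mul_comm (c ^ n)]
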